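/- Let 0 ≤ T* < T and let X : [T*, T] → ℝ^N be twice continuously differentiable with Ẍ(t) = Δ X(t) for all t ∈ (T*, T). If {k₁, …, k_ℓ} is a strategic set of nodes and the components satisfy x_k(t) = 0 for all t ∈ (T*, T) and all k ∈ {k₁, …, k_ℓ}, then X(T) = 0 and Ẋ(T) = 0. (Lemma 2.2) -/

import Mathlib

open Matrix Set

private lemma zero_deriv_on {a b : ℝ} {f f' : ℝ → ℝ}
    (hf : ∀ t ∈ Set.Ioo a b, HasDerivAt f (f' t) t)
    (h0 : ∀ t ∈ Set.Ioo a b, f t = 0) :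
    ∀ t ∈ Set.Ioo a b, f' t = 0 := by
  intro t ht
  have hev : f =ᶠ[nhds t] fun _ => (0 : ℝ) :=
    Filter.eventually_of_mem (isOpen_Ioo.mem_nhds ht) h0
  have h2 : HasDerivAt f 0 t := (hasDerivAt_const t (0:ℝ)).congr_of_eventuallyEq hev
  exact (hf t ht).unique h2

/-- **Lemma 2.2.** Let `0 ≤ T* < T` and let `X : [T*, T] → ℝ^N` be twice continuously
differentiable with `Ẍ(t) = Δ X(t)` on `(T*, T)`.  If `K` is a strategic set of nodes and
`x_k(t) = 0` for all `t ∈ (T*, T)` and all `k ∈ K`, then `X(T) = 0` and `Ẋ(T) = 0`. -/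
theorem strategic_null_state
    {N : ℕ} (hN : 2 ≤ N)
    (Δ : Matrix (Fin N) (Fin N) ℝ) (hsymm : Δ.IsSymm)
    (ω : Fin N → ℝ) (v : Fin N → Fin N → ℝ)
    (hω0 : ω ⟨0, by omega⟩ = 0) (hωmono : StrictMono ω)
    (horth : ∀ n m : Fin N, v n ⬝ᵥ v m = if n = m then 1 else 0)
    (heig : ∀ n : Fin N, Δ.mulVec (v n) = (-(ω n) ^ 2) • v n)
    (Tstar T : ℝ) (hTstar : 0 ≤ Tstar) (hTT : Tstar < T)
    (X X' X'' : ℝ → Fin N → ℝ)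
    (hd1 : ∀ t ∈ Icc Tstar T, HasDerivAt X (X' t) t)
    (hd2 : ∀ t ∈ Icc Tstar T, HasDerivAt X' (X'' t) t)
    (hcont : ContinuousOn X'' (Icc Tstar T))
    (hode : ∀ t ∈ Ioo Tstar T, X'' t = Δ.mulVec (X t))
    (K : Finset (Fin N)) (hstrat : ∀ n : Fin N, ∃ k ∈ K, v n k ≠ 0)
    (hzero : ∀ k ∈ K, ∀ t ∈ Ioo Tstar T, X t k = 0) :
    X T = 0 ∧ X' T = 0 := by
  have hsub : Ioo Tstar T ⊆ Icc Tstar T := Ioo_subset_Icc_self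
  -- component derivatives
  have hX1 : ∀ i, ∀ t ∈ Icc Tstar T, HasDerivAt (fun s => X s i) (X' t i) t :=
    fun i t ht => hasDerivAt_pi.mp (hd1 t ht) i
  have hX2 : ∀ i, ∀ t ∈ Icc Tstar T, HasDerivAt (fun s => X' s i) (X'' t i) t :=
    fun i t ht => hasDerivAt_pi.mp (hd2 t ht) i
  -- derivative of coefficients
  have hA1 : ∀ n, ∀ t ∈ Icc Tstar T,
      HasDerivAt (fun s => v n ⬝ᵥ X s) (v n ⬝ᵥ X' t) t := by
    intro n t ht
    simp only [dotProduct]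
    exact HasDerivAt.fun_sum fun i _ => (hX1 i t ht).const_mul (v n i)
  have hA2 : ∀ n, ∀ t ∈ Icc Tstar T,
      HasDerivAt (fun s => v n ⬝ᵥ X' s) (v n ⬝ᵥ X'' t) t := by
    intro n t ht
    simp only [dotProduct]
    exact HasDerivAt.fun_sum fun i _ => (hX2 i t ht).const_mul (v n i)
  -- eigen relation in dot-product form
  have heigdot : ∀ n, ∀ y : Fin N → ℝ,
      v n ⬝ᵥ Δ.mulVec y = (-(ω n) ^ 2) * (v n ⬝ᵥ y) := by
    intro n y
    rw [dotProduct_mulVec]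
    have h1 : v n ᵥ* Δ = (-(ω n) ^ 2) • v n := by
      rw [← Matrix.mulVec_transpose, hsymm.eq]
      exact heig n
    rw [h1, smul_dotProduct, smul_eq_mul]
  -- completeness of the eigenbasis
  have hVV : ∀ i j, (∑ n, v n i * v n j) = if i = j then (1:ℝ) else 0 := by
    have h1 : (Matrix.of v) * (Matrix.of v)ᵀ = 1 := by
      ext n m
      simpa [Matrix.mul_apply, Matrix.one_apply, dotProduct] using horth n m
    have h2 : (Matrix.of v)ᵀ * (Matrix.of v) = 1 := mul_eq_one_comm.mp h1
    intro i j
    have := congrFun (congrFun h2 i) j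
    simpa [Matrix.mul_apply, Matrix.one_apply] using this
  have hexp : ∀ (y : Fin N → ℝ) i, ∑ n, (v n ⬝ᵥ y) * v n i = y i := by
    intro y i
    calc ∑ n, (v n ⬝ᵥ y) * v n i = ∑ n, ∑ j, y j * (v n j * v n i) := by
          simp only [dotProduct, Finset.sum_mul]
          exact Finset.sum_congr rfl fun n _ => Finset.sum_congr rfl fun j _ => by ring
      _ = ∑ j, y j * ∑ n, v n j * v n i := by
          rw [Finset.sum_comm]
          exact Finset.sum_congr rfl fun j _ => by rw [Finset.mul_sum]
      _ = y i := by
          simp only [hVV, mul_ite, mul_one, mul_zero]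
          simp
  -- key induction: all "powers" of the coefficients vanish at observed nodes
  have key : ∀ j : ℕ, ∀ k ∈ K, ∀ t ∈ Ioo Tstar T,
      ∑ n, (-(ω n) ^ 2) ^ j * (v n ⬝ᵥ X t) * v n k = 0 := by
    intro j
    induction j with
    | zero =>
      intro k hk t ht
      simpa [hexp (X t) k] using hzero k hk t ht
    | succ j ih =>
      intro k hk t ht
      -- first derivative vanishes
      have hG : ∀ s ∈ Ioo Tstar T,
          ∑ n, (-(ω n) ^ 2) ^ j * (v n ⬝ᵥ X' s) * v n k = 0 := by
        refine zero_deriv_on (f := fun s => ∑ n, (-(ω n) ^ 2) ^ j * (v n ⬝ᵥ X s) * v n k)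
          (f' := fun s => ∑ n, (-(ω n) ^ 2) ^ j * (v n ⬝ᵥ X' s) * v n k) ?_ (ih k hk)
        intro s hs
        exact HasDerivAt.fun_sum fun n _ =>
          ((hA1 n s (hsub hs)).const_mul ((-(ω n) ^ 2) ^ j)).mul_const (v n k)
      -- second derivative vanishes
      have hH : ∀ s ∈ Ioo Tstar T,
          ∑ n, (-(ω n) ^ 2) ^ j * (v n ⬝ᵥ X'' s) * v n k = 0 := by
        refine zero_deriv_on (f := fun s => ∑ n, (-(ω n) ^ 2) ^ j * (v n ⬝ᵥ X' s) * v n k)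
          (f' := fun s => ∑ n, (-(ω n) ^ 2) ^ j * (v n ⬝ᵥ X'' s) * v n k) ?_ hG
        intro s hs
        exact HasDerivAt.fun_sum fun n _ =>
          ((hA2 n s (hsub hs)).const_mul ((-(ω n) ^ 2) ^ j)).mul_const (v n k)
      have := hH t ht
      rw [hode t ht] at this
      calc ∑ n, (-(ω n) ^ 2) ^ (j + 1) * (v n ⬝ᵥ X t) * v n k
          = ∑ n, (-(ω n) ^ 2) ^ j * (v n ⬝ᵥ Δ.mulVec (X t)) * v n k := by
            refine Finset.sum_congr rfl fun n _ => ?_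
            rw [heigdot n (X t), pow_succ]
            ring
        _ = 0 := this
  -- extend to arbitrary polynomials of the eigenvalues
  have poly : ∀ q : Polynomial ℝ, ∀ k ∈ K, ∀ t ∈ Ioo Tstar T,
      ∑ n, q.eval (-(ω n) ^ 2) * (v n ⬝ᵥ X t) * v n k = 0 := by
    intro q
    induction q using Polynomial.induction_on' with
    | add p r hp hr =>
      intro k hk t ht
      have := hp k hk t ht
      have := hr k hk t ht
      simp only [Polynomial.eval_add, add_mul, Finset.sum_add_distrib]
      rw [hp k hk t ht, hr k hk t ht, add_zero]
    | monomial j c =>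
      intro k hk t ht
      have h := key j k hk t ht
      simp only [Polynomial.eval_monomial]
      calc ∑ n, c * (-(ω n) ^ 2) ^ j * (v n ⬝ᵥ X t) * v n k
          = c * ∑ n, (-(ω n) ^ 2) ^ j * (v n ⬝ᵥ X t) * v n k := by
            rw [Finset.mul_sum]
            exact Finset.sum_congr rfl fun n _ => by ring
        _ = 0 := by rw [h, mul_zero]
  -- the eigenvalues −ω_n² are distinct
  have hωnonneg : ∀ i, 0 ≤ ω i := by
    intro i
    rw [← hω0]
    exact hωmono.monotone (by simp [Fin.le_def])
  have hsqne : ∀ {n m : Fin N}, n ≠ m → (ω n) ^ 2 ≠ (ω m) ^ 2 := by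
    intro n m hnm
    rcases lt_or_gt_of_ne (fun h => hnm (hωmono.injective h)) with h | h
    · exact ne_of_lt (pow_lt_pow_left₀ h (hωnonneg n) two_ne_zero)
    · exact (ne_of_lt (pow_lt_pow_left₀ h (hωnonneg m) two_ne_zero)).symm
  -- each coefficient vanishes on the open interval
  have ha : ∀ m, ∀ t ∈ Ioo Tstar T, v m ⬝ᵥ X t = 0 := by
    intro m t ht
    obtain ⟨k, hk, hvk⟩ := hstrat m
    set q : Polynomial ℝ :=
      ∏ n ∈ Finset.univ.erase m, (Polynomial.X + Polynomial.C ((ω n) ^ 2)) with hq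
    have heval : ∀ p : Fin N,
        q.eval (-(ω p) ^ 2) = ∏ n ∈ Finset.univ.erase m, ((ω n) ^ 2 - (ω p) ^ 2) := by
      intro p
      rw [hq, Polynomial.eval_prod]
      exact Finset.prod_congr rfl fun n _ => by simp; ring
    have hsum := poly q k hk t ht
    rw [Finset.sum_eq_single m (fun p _ hp => by
        rw [heval p, Finset.prod_eq_zero (Finset.mem_erase.mpr ⟨hp, Finset.mem_univ p⟩)
          (by ring), zero_mul, zero_mul])
      (fun h => absurd (Finset.mem_univ m) h)] at hsum
    have hne : q.eval (-(ω m) ^ 2) ≠ 0 := by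
      rw [heval m]
      refine Finset.prod_ne_zero_iff.mpr fun n hn => ?_
      exact sub_ne_zero.mpr (hsqne (Finset.mem_erase.mp hn).1)
    rcases mul_eq_zero.mp hsum with h | h
    · rcases mul_eq_zero.mp h with h | h
      · exact absurd h hne
      · exact h
    · exact absurd h hvk
  -- X vanishes on the open interval
  have hX0 : ∀ t ∈ Ioo Tstar T, X t = 0 := by
    intro t ht
    funext i
    rw [← hexp (X t) i]
    simp [ha _ t ht]
  -- X' vanishes on the open interval
  have hX'0 : ∀ t ∈ Ioo Tstar T, X' t = 0 := by
    intro t ht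
    funext i
    refine zero_deriv_on (f := fun s => X s i) (f' := fun s => X' s i)
      (fun s hs => hX1 i s (hsub hs)) (fun s hs => by simp [hX0 s hs]) t ht
  -- pass to the limit at T
  have hTmem : T ∈ Icc Tstar T := right_mem_Icc.mpr hTT.le
  have hnb : (nhdsWithin T (Ioo Tstar T)).NeBot := by
    rw [← mem_closure_iff_nhdsWithin_neBot, closure_Ioo hTT.ne]
    exact hTmem
  have hevX : X =ᶠ[nhdsWithin T (Ioo Tstar T)] fun _ => (0 : Fin N → ℝ) :=
    Filter.eventually_of_mem self_mem_nhdsWithin hX0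
  have hevX' : X' =ᶠ[nhdsWithin T (Ioo Tstar T)] fun _ => (0 : Fin N → ℝ) :=
    Filter.eventually_of_mem self_mem_nhdsWithin hX'0
  constructor
  · have h1 : Filter.Tendsto X (nhdsWithin T (Ioo Tstar T)) (nhds (X T)) :=
      ((hd1 T hTmem).continuousAt).continuousWithinAt
    have h2 : Filter.Tendsto X (nhdsWithin T (Ioo Tstar T)) (nhds 0) :=
      (Filter.tendsto_congr' hevX).mpr tendsto_const_nhds
    exact tendsto_nhds_unique h1 h2
  · have h1 : Filter.Tendsto X' (nhdsWithin T (Ioo Tstar T)) (nhds (X' T)) :=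
      ((hd2 T hTmem).continuousAt).continuousWithinAt
    have h2 : Filter.Tendsto X' (nhdsWithin T (Ioo Tstar T)) (nhds 0) :=
      (Filter.tendsto_congr' hevX').mpr tendsto_const_nhds
    exact tendsto_nhds_unique h1 h2
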